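/- Let β, c ∈ ℂ, N ∈ ℕ, and define k(t) := Log(1 − i/(t+β)) and w(t) := −it + Log(t+β) using the principal complex logarithm. Define φ : ℤ × ℝ → ℂ by φ(n,t) := exp((n/2)·k(t) + N·w(t) + c). Then for every n ∈ ℤ and every t ∈ ℝ such that t+β lies off the closed negative real axis and (t+β−i)/(t+β) lies off the closed negative real axis (so that both logarithms are differentiable at t), one has i·∂ₜφ(n,t) = (n/2)(φ(n+2,t) − 2φ(n,t) + φ(n−2,t)) − N(φ(n+2,t) − 2φ(n,t)). -/

import Mathlib

open Complex

/-- The exponential entry `φ(n,t) = exp((n/2)·k(t) + N·w(t) + c)` with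
`k(t) = Log(1 − i/(t+β))` and `w(t) = −it + Log(t+β)` satisfies the `Φ`-part of the
Casoratian condition equations of the nonisospectral semi-discrete NLS, at every time `t`
where both principal logarithms are differentiable. -/
theorem phi_entry_satisfies_condition (β c : ℂ) (N : ℕ)
    (k w : ℝ → ℂ)
    (hk : ∀ t : ℝ, k t = Complex.log (1 - Complex.I / ((t : ℂ) + β)))
    (hw : ∀ t : ℝ, w t = -Complex.I * (t : ℂ) + Complex.log ((t : ℂ) + β))
    (φ : ℤ → ℝ → ℂ)
    (hφ : ∀ (n : ℤ) (t : ℝ),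
      φ n t = Complex.exp (((n : ℂ) / 2) * k t + (N : ℂ) * w t + c)) :
    ∀ (n : ℤ) (t : ℝ),
      ((t : ℂ) + β) ∈ Complex.slitPlane →
      (((t : ℂ) + β - Complex.I) / ((t : ℂ) + β)) ∈ Complex.slitPlane →
      Complex.I * deriv (fun s : ℝ => φ n s) t
        = ((n : ℂ) / 2) * (φ (n + 2) t - 2 * φ n t + φ (n - 2) t)
          - (N : ℂ) * (φ (n + 2) t - 2 * φ n t) := by
  intro n t h1 h2
  set z : ℂ := (t : ℂ) + β with hzdef
  have hz : z ≠ 0 := Complex.slitPlane_ne_zero h1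
  have hz2 : z - Complex.I ≠ 0 := by
    intro h
    apply Complex.slitPlane_ne_zero h2
    rw [show (t : ℂ) + β - Complex.I = z - Complex.I from rfl, h, zero_div]
  have hmem : (1 - Complex.I / z) ∈ Complex.slitPlane := by
    have : 1 - Complex.I / z = (z - Complex.I) / z := by field_simp
    rw [this]; exact h2
  have hne : (1 - Complex.I / z) ≠ 0 := Complex.slitPlane_ne_zero hmem
  -- derivative of s ↦ (s : ℂ) + β
  have hid : HasDerivAt (fun s : ℝ => (s : ℂ) + β) 1 t := by
    simpa using (Complex.ofRealCLM.hasDerivAt (x := t)).add_const β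
  -- derivative of inner function of k
  have hf : HasDerivAt (fun s : ℝ => 1 - Complex.I / ((s : ℂ) + β))
      (Complex.I / z ^ 2) t := by
    have hd : HasDerivAt (fun s : ℝ => Complex.I / ((s : ℂ) + β))
        ((0 * z - Complex.I * 1) / z ^ 2) t :=
      (hasDerivAt_const t Complex.I).div hid hz
    have : HasDerivAt (fun s : ℝ => 1 - Complex.I / ((s : ℂ) + β))
        (0 - (0 * z - Complex.I * 1) / z ^ 2) t := (hasDerivAt_const t (1 : ℂ)).sub hd
    convert this using 1
    ring
  have hK : HasDerivAt (fun s : ℝ => Complex.log (1 - Complex.I / ((s : ℂ) + β)))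
      ((Complex.I / z ^ 2) / (1 - Complex.I / z)) t :=
    hf.clog_real hmem
  have hW : HasDerivAt (fun s : ℝ => -Complex.I * (s : ℂ) + Complex.log ((s : ℂ) + β))
      (-Complex.I + 1 / z) t := by
    have hl : HasDerivAt (fun s : ℝ => Complex.log ((s : ℂ) + β)) (1 / z) t :=
      hid.clog_real h1
    have hm : HasDerivAt (fun s : ℝ => -Complex.I * (s : ℂ)) (-Complex.I) t := by
      simpa using (Complex.ofRealCLM.hasDerivAt (x := t)).const_mul (-Complex.I)
    exact hm.add hl
  -- derivative of the exponent
  set kd : ℂ := (Complex.I / z ^ 2) / (1 - Complex.I / z) with hkd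
  set wd : ℂ := -Complex.I + 1 / z with hwd
  have hG : HasDerivAt (fun s : ℝ =>
      ((n : ℂ) / 2) * Complex.log (1 - Complex.I / ((s : ℂ) + β))
        + (N : ℂ) * (-Complex.I * (s : ℂ) + Complex.log ((s : ℂ) + β)) + c)
      (((n : ℂ) / 2) * kd + (N : ℂ) * wd) t := by
    simpa using ((hK.const_mul ((n : ℂ) / 2)).add (hW.const_mul (N : ℂ))).add_const c
  have hfun : (fun s : ℝ => φ n s) = fun s : ℝ =>
      Complex.exp (((n : ℂ) / 2) * Complex.log (1 - Complex.I / ((s : ℂ) + β))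
        + (N : ℂ) * (-Complex.I * (s : ℂ) + Complex.log ((s : ℂ) + β)) + c) := by
    funext s; rw [hφ, hk, hw]
  have hderiv : deriv (fun s : ℝ => φ n s) t
      = Complex.exp (((n : ℂ) / 2) * k t + (N : ℂ) * w t + c)
        * (((n : ℂ) / 2) * kd + (N : ℂ) * wd) := by
    rw [hfun, hG.cexp.deriv, hk, hw]
  -- the shifted entries
  have hEk : Complex.exp (k t) = 1 - Complex.I / z := by
    rw [hk]; exact Complex.exp_log hne
  set E : ℂ := Complex.exp (((n : ℂ) / 2) * k t + (N : ℂ) * w t + c) with hE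
  have hplus : φ (n + 2) t = E * (1 - Complex.I / z) := by
    rw [hφ, hE]
    have : (((n : ℤ) + 2 : ℤ) : ℂ) / 2 * k t + (N : ℂ) * w t + c
        = (((n : ℂ) / 2) * k t + (N : ℂ) * w t + c) + k t := by
      push_cast; ring
    rw [this, Complex.exp_add, hEk]
  have hminus : φ (n - 2) t = E * (1 - Complex.I / z)⁻¹ := by
    rw [hφ, hE]
    have : (((n : ℤ) - 2 : ℤ) : ℂ) / 2 * k t + (N : ℂ) * w t + c
        = (((n : ℂ) / 2) * k t + (N : ℂ) * w t + c) + (-(k t)) := by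
      push_cast; ring
    rw [this, Complex.exp_add, Complex.exp_neg, hEk]
  have hmid : φ n t = E := by rw [hφ, hE]
  rw [hderiv, hplus, hminus, hmid, hkd, hwd]
  clear_value z
  have key : Complex.I * ((n : ℂ) / 2 * (Complex.I / z ^ 2 / (1 - Complex.I / z))
        + (N : ℂ) * (-Complex.I + 1 / z))
      = (n : ℂ) / 2 * ((1 - Complex.I / z) - 2 + (1 - Complex.I / z)⁻¹)
        - (N : ℂ) * ((1 - Complex.I / z) - 2) := by
    rw [show (1 : ℂ) - Complex.I / z = (z - Complex.I) / z by field_simp, inv_div,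
      show Complex.I / z ^ 2 / ((z - Complex.I) / z) = Complex.I / (z * (z - Complex.I)) by
        rw [div_div]
        congr 1
        field_simp]
    field_simp
    linear_combination (2 * Complex.I * z * (N : ℂ) - 2 * z ^ 2 * (N : ℂ)) * Complex.I_sq
  linear_combination E * key
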